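/- Let G be a finite simple graph, let R and S be disjoint subsets of V(G), and let T = R ∪ S. Let σ_T be a T-signature, σ_R an R-signature and σ_S an S-signature such that the triple (σ_T, σ_R, σ_S) is compatible, there exists a valid partial b-coloring of G[R] with k colors whose R-signature is σ_R, and there exists a valid partial b-coloring of G[S] with k colors whose S-signature is σ_S. Then there exists a valid partial b-coloring of G[T] with k colors whose T-signature is σ_T. -/

import Mathlib

open scoped Classical

namespace BCol

/-- The three possible descriptions of a color class on an equivalence class:
`none`, `contains`, or `demand`. -/
inductive Desc where
  | none
  | contains
  | demand
deriving DecidableEq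

variable {V : Type*}

/-- The neighborhood of `v` outside of `U`, i.e. `N_G(v) \ U`. -/
def extN (G : SimpleGraph V) (U : Set V) (v : V) : Set V := G.neighborSet v \ U

/-- The `~_U`-equivalence class of `u`: the vertices of `U` with the same
neighborhood outside of `U` as `u`. -/
def cls (G : SimpleGraph V) (U : Set V) (u : V) : Set V :=
  {v | v ∈ U ∧ extN G U v = extN G U u}

/-- The set of equivalence classes `U/~_U`. -/
def eqClasses (G : SimpleGraph V) (U : Set V) : Set (Set V) :=
  {Q | ∃ u ∈ U, Q = cls G U u}

/-- The equivalence classes of `~_U`, as a type. -/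
abbrev Classes (G : SimpleGraph V) (U : Set V) := {Q // Q ∈ eqClasses G U}

/-- A `U`-type: a pair of a map `U/~_U → {none, contains, demand}` and a bit. -/
abbrev UType (G : SimpleGraph V) (U : Set V) := (Classes G U → Desc) × Bool

/-- The neighborhood of `v` in the induced subgraph `G[U]`. -/
def indN (G : SimpleGraph V) (U : Set V) (v : V) : Set V := G.neighborSet v ∩ U

/-- `C` is an independent set of the induced subgraph `G[U]`. -/
def IndepIn (G : SimpleGraph V) (U C : Set V) : Prop :=
  C ⊆ U ∧ ∀ u ∈ C, ∀ v ∈ C, ¬ G.Adj u v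

/-- The `desc`-component of the `U`-type of the color class `C` relative to the set `B`
of partial `b`-vertices. -/
noncomputable def descOf (G : SimpleGraph V) (U B C : Set V) (Q : Classes G U) : Desc :=
  if (Q.1 ∩ C).Nonempty then Desc.contains
  else if ∃ v ∈ B ∩ Q.1, indN G U v ∩ C = ∅ then Desc.demand
  else Desc.none

/-- The `U`-type of the color class `C` relative to the set `B` of partial `b`-vertices. -/
noncomputable def typeOf (G : SimpleGraph V) (U B C : Set V) : UType G U :=
  (descOf G U B C, if (C ∩ B).Nonempty then true else false)

/-- `C` is valid relative to `B`: there is no class `Q ∈ U/~_U` intersecting `C` such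
that some `v ∈ B ∩ Q` has closed neighborhood in `G[U]` disjoint from `C`. -/
def ValidClass (G : SimpleGraph V) (U B C : Set V) : Prop :=
  ¬ ∃ Q ∈ eqClasses G U, (Q ∩ C).Nonempty ∧
      ∃ v ∈ B ∩ Q, (insert v (indN G U v)) ∩ C = ∅

/-- `Q_R Q_S ∈ E(H)`: every vertex of `Q_R` is adjacent to every vertex of `Q_S`. -/
def OpEdge (G : SimpleGraph V) (QR QS : Set V) : Prop :=
  ∀ u ∈ QR, ∀ v ∈ QS, G.Adj u v

/-- An `R`-type `ρ` and an `S`-type `σ` are compatible. -/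
def CompatibleTypes (G : SimpleGraph V) (R S : Set V)
    (ρ : UType G R) (σ : UType G S) : Prop :=
  (¬ (ρ.2 = true ∧ σ.2 = true)) ∧
  (¬ ∃ (QR : Classes G R) (QS : Classes G S),
      OpEdge G QR.1 QS.1 ∧ ρ.1 QR = Desc.contains ∧ σ.1 QS = Desc.contains) ∧
  (∀ Q : Classes G (R ∪ S),
    ((∃ QR : Classes G R, QR.1 ⊆ Q.1 ∧ ρ.1 QR = Desc.contains) ∨
     (∃ QS : Classes G S, QS.1 ⊆ Q.1 ∧ σ.1 QS = Desc.contains)) →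
    ((∀ QR : Classes G R, QR.1 ⊆ Q.1 → ρ.1 QR = Desc.demand →
        ∃ QS : Classes G S, σ.1 QS = Desc.contains ∧ OpEdge G QR.1 QS.1) ∧
     (∀ QS : Classes G S, QS.1 ⊆ Q.1 → σ.1 QS = Desc.demand →
        ∃ QR : Classes G R, ρ.1 QR = Desc.contains ∧ OpEdge G QR.1 QS.1)))

/-- The merge type of an `R`-type `ρ` and an `S`-type `σ`. -/
noncomputable def mergeType (G : SimpleGraph V) (R S : Set V)
    (ρ : UType G R) (σ : UType G S) : UType G (R ∪ S) :=
  (fun Q =>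
    if (∃ QR : Classes G R, QR.1 ⊆ Q.1 ∧ ρ.1 QR = Desc.contains) ∨
       (∃ QS : Classes G S, QS.1 ⊆ Q.1 ∧ σ.1 QS = Desc.contains) then
      Desc.contains
    else if (∃ QR : Classes G R, QR.1 ⊆ Q.1 ∧ ρ.1 QR = Desc.demand ∧
              ∀ QS : Classes G S, OpEdge G QR.1 QS.1 → σ.1 QS ≠ Desc.contains) ∨
            (∃ QS : Classes G S, QS.1 ⊆ Q.1 ∧ σ.1 QS = Desc.demand ∧
              ∀ QR : Classes G R, OpEdge G QR.1 QS.1 → ρ.1 QR ≠ Desc.contains) then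
      Desc.demand
    else Desc.none,
   ρ.2 || σ.2)

/-- `((C_1, …, C_k), B)` is a partial `b`-coloring of `G[U]` with `k` colors:
the `C_i` partition `U` into independent sets of `G[U]`, `B ⊆ U`, and each color class
contains at most one vertex of `B`. -/
def IsPartialBColoring (G : SimpleGraph V) (U : Set V) {k : ℕ}
    (C : Fin k → Set V) (B : Set V) : Prop :=
  (⋃ i, C i) = U ∧ (Pairwise fun i j => Disjoint (C i) (C j)) ∧
  (∀ i, IndepIn G U (C i)) ∧ B ⊆ U ∧ ∀ i, (C i ∩ B).Subsingleton

/-- A valid partial `b`-coloring of `G[U]`: every color class is valid relative to `B`. -/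
def IsValidPartialBColoring (G : SimpleGraph V) (U : Set V) {k : ℕ}
    (C : Fin k → Set V) (B : Set V) : Prop :=
  IsPartialBColoring G U C B ∧ ∀ i, ValidClass G U B (C i)

/-- The `U`-signature of the partial `b`-coloring `(C, B)`: to each `U`-type `τ` it
assigns the number of color classes whose `U`-type relative to `B` is `τ`. -/
noncomputable def sigOf (G : SimpleGraph V) (U : Set V) {k : ℕ}
    (C : Fin k → Set V) (B : Set V) : UType G U → ℕ :=
  fun τ => Nat.card {i : Fin k // typeOf G U B (C i) = τ}

/-- `σ` is a `U`-signature for `k` colors: the values of `σ` sum up to `k`. -/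
def IsSignature (G : SimpleGraph V) (U : Set V) (k : ℕ) (σ : UType G U → ℕ) : Prop :=
  ∑ᶠ τ, σ τ = k

/-- A triple `(σT, σR, σS)` of signatures is compatible: there is an assignment `f` of
natural numbers to the edges of the merge skeleton (i.e. to the compatible pairs of an
`R`-type and an `S`-type) such that the sums of `f` over the edges incident to each
`R`-type `ρ`, to each `S`-type `σ`, and over the edges labeled by each merge type `τ`
are `σR ρ`, `σS σ`, and `σT τ`, respectively. -/
def CompatibleSignatures (G : SimpleGraph V) (R S : Set V)
    (σT : UType G (R ∪ S) → ℕ) (σR : UType G R → ℕ) (σS : UType G S → ℕ) : Prop :=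
  ∃ f : UType G R × UType G S → ℕ,
    (∀ p, ¬ CompatibleTypes G R S p.1 p.2 → f p = 0) ∧
    (∀ ρ, ∑ᶠ σ, f (ρ, σ) = σR ρ) ∧
    (∀ σ, ∑ᶠ ρ, f (ρ, σ) = σS σ) ∧
    (∀ τ, ∑ᶠ p ∈ {p : UType G R × UType G S | mergeType G R S p.1 p.2 = τ}, f p = σT τ)
section Aux

variable {V : Type*}

instance : Fintype Desc := ⟨{.none, .contains, .demand}, by intro x; cases x <;> simp⟩

lemma mem_cls_self (G : SimpleGraph V) {U : Set V} {u : V} (hu : u ∈ U) : u ∈ cls G U u :=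
  ⟨hu, rfl⟩

lemma cls_mem_eqClasses (G : SimpleGraph V) {U : Set V} {u : V} (hu : u ∈ U) :
    cls G U u ∈ eqClasses G U := ⟨u, hu, rfl⟩

lemma cls_subset (G : SimpleGraph V) (U : Set V) (u : V) : cls G U u ⊆ U :=
  fun _ hv => hv.1

lemma eqClasses_subset (G : SimpleGraph V) {U : Set V} {Q : Set V}
    (hQ : Q ∈ eqClasses G U) : Q ⊆ U := by
  obtain ⟨u, -, rfl⟩ := hQ
  exact cls_subset G U u

lemma eq_cls_of_mem (G : SimpleGraph V) {U : Set V} {Q : Set V} {v : V}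
    (hQ : Q ∈ eqClasses G U) (hv : v ∈ Q) : Q = cls G U v := by
  obtain ⟨u, -, rfl⟩ := hQ
  obtain ⟨hvU, hve⟩ := hv
  ext w
  constructor
  · rintro ⟨hwU, hwe⟩; exact ⟨hwU, hwe.trans hve.symm⟩
  · rintro ⟨hwU, hwe⟩; exact ⟨hwU, hwe.trans hve⟩

lemma extN_union_left (G : SimpleGraph V) (R S : Set V) (v : V) :
    extN G (R ∪ S) v = extN G R v \ S := by
  simp [extN, Set.diff_diff]

lemma extN_union_right (G : SimpleGraph V) (R S : Set V) (v : V) :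
    extN G (R ∪ S) v = extN G S v \ R := by
  simp [extN, Set.diff_diff, Set.union_comm S R]

lemma cls_subset_cls_union_left (G : SimpleGraph V) (R S : Set V) (u : V) :
    cls G R u ⊆ cls G (R ∪ S) u := by
  rintro v ⟨hvR, hve⟩
  exact ⟨Or.inl hvR, by rw [extN_union_left, extN_union_left, hve]⟩

lemma cls_subset_cls_union_right (G : SimpleGraph V) (R S : Set V) (u : V) :
    cls G S u ⊆ cls G (R ∪ S) u := by
  rintro v ⟨hvS, hve⟩
  exact ⟨Or.inr hvS, by rw [extN_union_right, extN_union_right, hve]⟩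

lemma opEdge_cls (G : SimpleGraph V) {R S : Set V} (hRS : Disjoint R S) {u w : V}
    (hu : u ∈ R) (hw : w ∈ S) (hadj : G.Adj u w) :
    OpEdge G (cls G R u) (cls G S w) := by
  rintro u' ⟨hu'R, hu'e⟩ w' ⟨hw'S, hw'e⟩
  have hwn : w ∈ extN G R u := ⟨hadj, fun hwR => hRS.ne_of_mem hwR hw rfl⟩
  have hadj' : G.Adj u' w := by
    have hx : w ∈ extN G R u' := by rw [hu'e]; exact hwn
    exact hx.1
  have hun : u' ∈ extN G S w := ⟨G.adj_symm hadj', fun hu'S => hRS.ne_of_mem hu'R hu'S rfl⟩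
  have : u' ∈ extN G S w' := by rw [hw'e]; exact hun
  exact G.adj_symm this.1

end Aux
section Aux2

variable {V : Type*}

lemma descOf_eq_contains_iff (G : SimpleGraph V) (U B C : Set V) (Q : Classes G U) :
    descOf G U B C Q = Desc.contains ↔ (Q.1 ∩ C).Nonempty := by
  unfold descOf
  split_ifs with h1 h2 <;> simp_all

lemma descOf_eq_demand_iff (G : SimpleGraph V) (U B C : Set V) (Q : Classes G U) :
    descOf G U B C Q = Desc.demand ↔
      (¬ (Q.1 ∩ C).Nonempty ∧ ∃ v ∈ B ∩ Q.1, indN G U v ∩ C = ∅) := by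
  unfold descOf
  split_ifs with h1 h2 <;> simp_all

lemma union_contains_iff (G : SimpleGraph V) {R S CR CS : Set V}
    (hCR : CR ⊆ R) (hCS : CS ⊆ S) (Q : Classes G (R ∪ S)) :
    (Q.1 ∩ (CR ∪ CS)).Nonempty ↔
      ((∃ QR : Classes G R, QR.1 ⊆ Q.1 ∧ (QR.1 ∩ CR).Nonempty) ∨
       (∃ QS : Classes G S, QS.1 ⊆ Q.1 ∧ (QS.1 ∩ CS).Nonempty)) := by
  constructor
  · rintro ⟨w, hwQ, hwC⟩
    have hQw : Q.1 = cls G (R ∪ S) w := eq_cls_of_mem G Q.2 hwQ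
    rcases hwC with hwCR | hwCS
    · left
      refine ⟨⟨cls G R w, cls_mem_eqClasses G (hCR hwCR)⟩, ?_, ⟨w, mem_cls_self G (hCR hwCR), hwCR⟩⟩
      rw [hQw]
      exact cls_subset_cls_union_left G R S w
    · right
      refine ⟨⟨cls G S w, cls_mem_eqClasses G (hCS hwCS)⟩, ?_, ⟨w, mem_cls_self G (hCS hwCS), hwCS⟩⟩
      rw [hQw]
      exact cls_subset_cls_union_right G R S w
  · rintro (⟨QR, hsub, w, hwQR, hwC⟩ | ⟨QS, hsub, w, hwQS, hwC⟩)
    · exact ⟨w, hsub hwQR, Or.inl hwC⟩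
    · exact ⟨w, hsub hwQS, Or.inr hwC⟩

lemma union_demand_iff (G : SimpleGraph V) {R S BR BS CR CS : Set V} (hRS : Disjoint R S)
    (hBR : BR ⊆ R) (hBS : BS ⊆ S) (hCR : CR ⊆ R) (hCS : CS ⊆ S) (Q : Classes G (R ∪ S))
    (hnc : ¬ (Q.1 ∩ (CR ∪ CS)).Nonempty) :
    (∃ v ∈ (BR ∪ BS) ∩ Q.1, indN G (R ∪ S) v ∩ (CR ∪ CS) = ∅) ↔
      ((∃ QR : Classes G R, QR.1 ⊆ Q.1 ∧ descOf G R BR CR QR = Desc.demand ∧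
          ∀ QS : Classes G S, OpEdge G QR.1 QS.1 → descOf G S BS CS QS ≠ Desc.contains) ∨
       (∃ QS : Classes G S, QS.1 ⊆ Q.1 ∧ descOf G S BS CS QS = Desc.demand ∧
          ∀ QR : Classes G R, OpEdge G QR.1 QS.1 → descOf G R BR CR QR ≠ Desc.contains)) := by
  have hQempty : Q.1 ∩ (CR ∪ CS) = ∅ := Set.not_nonempty_iff_eq_empty.mp hnc
  constructor
  · rintro ⟨v, ⟨hvB, hvQ⟩, hvN⟩
    have hQv : Q.1 = cls G (R ∪ S) v := eq_cls_of_mem G Q.2 hvQ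
    rcases hvB with hvBR | hvBS
    · left
      have hvR : v ∈ R := hBR hvBR
      refine ⟨⟨cls G R v, cls_mem_eqClasses G hvR⟩, ?_, ?_, ?_⟩
      · rw [hQv]; exact cls_subset_cls_union_left G R S v
      · rw [descOf_eq_demand_iff]
        refine ⟨?_, v, ⟨hvBR, mem_cls_self G hvR⟩, ?_⟩
        · intro ⟨w, hw1, hw2⟩
          exact hnc ⟨w, (hQv ▸ cls_subset_cls_union_left G R S v) hw1, Or.inl hw2⟩
        · apply Set.eq_empty_of_subset_empty
          intro x ⟨hx1, hx2⟩
          rw [← hvN]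
          exact ⟨⟨hx1.1, Or.inl hx1.2⟩, Or.inl hx2⟩
      · intro QS hop hc
        rw [descOf_eq_contains_iff] at hc
        obtain ⟨w, hwQS, hwCS⟩ := hc
        have hadj : G.Adj v w := hop v (mem_cls_self G hvR) w hwQS
        have : w ∈ indN G (R ∪ S) v ∩ (CR ∪ CS) :=
          ⟨⟨hadj, Or.inr (eqClasses_subset G QS.2 hwQS)⟩, Or.inr hwCS⟩
        rw [hvN] at this
        exact this
    · right
      have hvS : v ∈ S := hBS hvBS
      refine ⟨⟨cls G S v, cls_mem_eqClasses G hvS⟩, ?_, ?_, ?_⟩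
      · rw [hQv]; exact cls_subset_cls_union_right G R S v
      · rw [descOf_eq_demand_iff]
        refine ⟨?_, v, ⟨hvBS, mem_cls_self G hvS⟩, ?_⟩
        · intro ⟨w, hw1, hw2⟩
          exact hnc ⟨w, (hQv ▸ cls_subset_cls_union_right G R S v) hw1, Or.inr hw2⟩
        · apply Set.eq_empty_of_subset_empty
          intro x ⟨hx1, hx2⟩
          rw [← hvN]
          exact ⟨⟨hx1.1, Or.inr hx1.2⟩, Or.inr hx2⟩
      · intro QR hop hc
        rw [descOf_eq_contains_iff] at hc
        obtain ⟨w, hwQR, hwCR⟩ := hc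
        have hadj : G.Adj v w := G.adj_symm (hop w hwQR v (mem_cls_self G hvS))
        have : w ∈ indN G (R ∪ S) v ∩ (CR ∪ CS) :=
          ⟨⟨hadj, Or.inl (eqClasses_subset G QR.2 hwQR)⟩, Or.inl hwCR⟩
        rw [hvN] at this
        exact this
  · rintro (⟨QR, hsub, hdem, hall⟩ | ⟨QS, hsub, hdem, hall⟩)
    · rw [descOf_eq_demand_iff] at hdem
      obtain ⟨-, v, ⟨hvBR, hvQR⟩, hvN⟩ := hdem
      have hvR : v ∈ R := hBR hvBR
      refine ⟨v, ⟨Or.inl hvBR, hsub hvQR⟩, ?_⟩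
      apply Set.eq_empty_of_subset_empty
      rintro x ⟨hx1, hx2⟩
      rcases hx2 with hxCR | hxCS
      · have : x ∈ indN G R v ∩ CR := ⟨⟨hx1.1, hCR hxCR⟩, hxCR⟩
        rw [hvN] at this
        exact this
      · have hxS : x ∈ S := hCS hxCS
        have hadj : G.Adj v x := hx1.1
        have hQReq : QR.1 = cls G R v := eq_cls_of_mem G QR.2 hvQR
        have hop : OpEdge G QR.1 (cls G S x) := by
          rw [hQReq]
          exact opEdge_cls G hRS hvR hxS hadj
        exact absurd ((descOf_eq_contains_iff _ _ _ _ _).mpr ⟨x, mem_cls_self G hxS, hxCS⟩)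
          (hall ⟨cls G S x, cls_mem_eqClasses G hxS⟩ hop)
    · rw [descOf_eq_demand_iff] at hdem
      obtain ⟨-, v, ⟨hvBS, hvQS⟩, hvN⟩ := hdem
      have hvS : v ∈ S := hBS hvBS
      refine ⟨v, ⟨Or.inr hvBS, hsub hvQS⟩, ?_⟩
      apply Set.eq_empty_of_subset_empty
      rintro x ⟨hx1, hx2⟩
      rcases hx2 with hxCR | hxCS
      · have hxR : x ∈ R := hCR hxCR
        have hadj : G.Adj x v := G.adj_symm hx1.1
        have hQSeq : QS.1 = cls G S v := eq_cls_of_mem G QS.2 hvQS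
        have hop : OpEdge G (cls G R x) QS.1 := by
          rw [hQSeq]
          exact opEdge_cls G hRS hxR hvS hadj
        exact absurd ((descOf_eq_contains_iff _ _ _ _ _).mpr ⟨x, mem_cls_self G hxR, hxCR⟩)
          (hall ⟨cls G R x, cls_mem_eqClasses G hxR⟩ hop)
      · have : x ∈ indN G S v ∩ CS := ⟨⟨hx1.1, hCS hxCS⟩, hxCS⟩
        rw [hvN] at this
        exact this

end Aux2
section Aux3

variable {V : Type*}

lemma mergeType_fst (G : SimpleGraph V) (R S : Set V) (ρ : UType G R) (σ : UType G S)
    (Q : Classes G (R ∪ S)) :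
    (mergeType G R S ρ σ).1 Q =
      if (∃ QR : Classes G R, QR.1 ⊆ Q.1 ∧ ρ.1 QR = Desc.contains) ∨
         (∃ QS : Classes G S, QS.1 ⊆ Q.1 ∧ σ.1 QS = Desc.contains) then
        Desc.contains
      else if (∃ QR : Classes G R, QR.1 ⊆ Q.1 ∧ ρ.1 QR = Desc.demand ∧
                ∀ QS : Classes G S, OpEdge G QR.1 QS.1 → σ.1 QS ≠ Desc.contains) ∨
              (∃ QS : Classes G S, QS.1 ⊆ Q.1 ∧ σ.1 QS = Desc.demand ∧
                ∀ QR : Classes G R, OpEdge G QR.1 QS.1 → ρ.1 QR ≠ Desc.contains) then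
        Desc.demand
      else Desc.none := rfl

lemma descOf_eq_none_iff (G : SimpleGraph V) (U B C : Set V) (Q : Classes G U) :
    descOf G U B C Q = Desc.none ↔
      (¬ (Q.1 ∩ C).Nonempty ∧ ¬ ∃ v ∈ B ∩ Q.1, indN G U v ∩ C = ∅) := by
  unfold descOf
  split_ifs with h1 h2 <;> simp_all

lemma typeOf_union (G : SimpleGraph V) {R S BR BS CR CS : Set V} (hRS : Disjoint R S)
    (hBR : BR ⊆ R) (hBS : BS ⊆ S) (hCR : CR ⊆ R) (hCS : CS ⊆ S) :
    typeOf G (R ∪ S) (BR ∪ BS) (CR ∪ CS)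
      = mergeType G R S (typeOf G R BR CR) (typeOf G S BS CS) := by
  have hc_iff : ∀ Q : Classes G (R ∪ S),
      (Q.1 ∩ (CR ∪ CS)).Nonempty ↔
        ((∃ QR : Classes G R, QR.1 ⊆ Q.1 ∧ (typeOf G R BR CR).1 QR = Desc.contains) ∨
         (∃ QS : Classes G S, QS.1 ⊆ Q.1 ∧ (typeOf G S BS CS).1 QS = Desc.contains)) := by
    intro Q
    rw [union_contains_iff G hCR hCS Q]
    constructor
    · rintro (⟨QR, h1, h2⟩ | ⟨QS, h1, h2⟩)
      · exact Or.inl ⟨QR, h1, (descOf_eq_contains_iff _ _ _ _ _).mpr h2⟩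
      · exact Or.inr ⟨QS, h1, (descOf_eq_contains_iff _ _ _ _ _).mpr h2⟩
    · rintro (⟨QR, h1, h2⟩ | ⟨QS, h1, h2⟩)
      · exact Or.inl ⟨QR, h1, (descOf_eq_contains_iff _ _ _ _ _).mp h2⟩
      · exact Or.inr ⟨QS, h1, (descOf_eq_contains_iff _ _ _ _ _).mp h2⟩
  have hfst : ∀ Q, (typeOf G (R ∪ S) (BR ∪ BS) (CR ∪ CS)).1 Q
      = (mergeType G R S (typeOf G R BR CR) (typeOf G S BS CS)).1 Q := by
    intro Q
    rw [mergeType_fst]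
    show descOf G (R ∪ S) (BR ∪ BS) (CR ∪ CS) Q = _
    by_cases h1 : ((∃ QR : Classes G R, QR.1 ⊆ Q.1 ∧ (typeOf G R BR CR).1 QR = Desc.contains) ∨
         (∃ QS : Classes G S, QS.1 ⊆ Q.1 ∧ (typeOf G S BS CS).1 QS = Desc.contains))
    · rw [if_pos h1]
      exact (descOf_eq_contains_iff _ _ _ _ _).mpr ((hc_iff Q).mpr h1)
    · rw [if_neg h1]
      have hnc : ¬ (Q.1 ∩ (CR ∪ CS)).Nonempty := fun h => h1 ((hc_iff Q).mp h)
      have hdem_iff := union_demand_iff G hRS hBR hBS hCR hCS Q hnc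
      by_cases h2 : ((∃ QR : Classes G R, QR.1 ⊆ Q.1 ∧ (typeOf G R BR CR).1 QR = Desc.demand ∧
                ∀ QS : Classes G S, OpEdge G QR.1 QS.1 →
                  (typeOf G S BS CS).1 QS ≠ Desc.contains) ∨
              (∃ QS : Classes G S, QS.1 ⊆ Q.1 ∧ (typeOf G S BS CS).1 QS = Desc.demand ∧
                ∀ QR : Classes G R, OpEdge G QR.1 QS.1 →
                  (typeOf G R BR CR).1 QR ≠ Desc.contains))
      · rw [if_pos h2]
        exact (descOf_eq_demand_iff _ _ _ _ _).mpr ⟨hnc, hdem_iff.mpr h2⟩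
      · rw [if_neg h2]
        exact (descOf_eq_none_iff _ _ _ _ _).mpr ⟨hnc, fun h => h2 (hdem_iff.mp h)⟩
  have hbit : ((CR ∪ CS) ∩ (BR ∪ BS)).Nonempty ↔
      ((CR ∩ BR).Nonempty ∨ (CS ∩ BS).Nonempty) := by
    constructor
    · rintro ⟨x, hxC, hxB⟩
      rcases hxC with hxC | hxC <;> rcases hxB with hxB | hxB
      · exact Or.inl ⟨x, hxC, hxB⟩
      · exact absurd rfl (hRS.ne_of_mem (hCR hxC) (hBS hxB))
      · exact absurd rfl (hRS.ne_of_mem (hBR hxB) (hCS hxC))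
      · exact Or.inr ⟨x, hxC, hxB⟩
    · rintro (⟨x, h1, h2⟩ | ⟨x, h1, h2⟩)
      · exact ⟨x, Or.inl h1, Or.inl h2⟩
      · exact ⟨x, Or.inr h1, Or.inr h2⟩
  refine Prod.ext (funext hfst) ?_
  show (if ((CR ∪ CS) ∩ (BR ∪ BS)).Nonempty then true else false)
      = ((typeOf G R BR CR).2 || (typeOf G S BS CS).2)
  show _ = ((if (CR ∩ BR).Nonempty then true else false)
      || (if (CS ∩ BS).Nonempty then true else false))
  by_cases hR : (CR ∩ BR).Nonempty <;> by_cases hS : (CS ∩ BS).Nonempty <;>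
    simp [hR, hS, hbit]

end Aux3
section Matching
open Finset
lemma exists_matching {ι A B : Type*} [DecidableEq ι] [Fintype A] [Fintype B]
    [DecidableEq A] [DecidableEq B] :
    ∀ (n : ℕ) (I J : Finset ι) (tR : ι → A) (tS : ι → B) (f : A × B → ℕ),
      I.card = n → J.card = n →
      (∀ a, ∑ b, f (a, b) = (I.filter fun i => tR i = a).card) →
      (∀ b, ∑ a, f (a, b) = (J.filter fun j => tS j = b).card) →
      ∃ π : ι → ι, Set.BijOn π ↑I ↑J ∧
        ∀ p : A × B, (I.filter fun i => tR i = p.1 ∧ tS (π i) = p.2).card = f p := by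
  intro n
  induction n with
  | zero =>
    intro I J tR tS f hI hJ hrow hcol
    have hI0 : I = ∅ := Finset.card_eq_zero.mp hI
    have hJ0 : J = ∅ := Finset.card_eq_zero.mp hJ
    subst hI0; subst hJ0
    refine ⟨id, by simp [Set.BijOn], ?_⟩
    intro p
    have h0 : ∑ b, f (p.1, b) = 0 := by simpa using hrow p.1
    have := (Finset.sum_eq_zero_iff.mp h0) p.2 (mem_univ _)
    simpa using this.symm
  | succ n ih =>
    intro I J tR tS f hI hJ hrow hcol
    obtain ⟨i0, hi0⟩ : I.Nonempty := Finset.card_pos.mp (by omega)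
    set a := tR i0 with ha
    have hra : 0 < ∑ b, f (a, b) := by
      rw [hrow a]
      exact Finset.card_pos.mpr ⟨i0, by simp [ha, hi0]⟩
    obtain ⟨b, -, hb⟩ := Finset.exists_ne_zero_of_sum_ne_zero (by omega : ∑ b, f (a, b) ≠ 0)
    have hfab : 1 ≤ f (a, b) := Nat.one_le_iff_ne_zero.mpr hb
    have hcb : 0 < (J.filter fun j => tS j = b).card := by
      rw [← hcol b]
      calc 0 < f (a, b) := hfab
        _ ≤ ∑ a', f (a', b) := Finset.single_le_sum (f := fun a' => f (a', b)) (fun _ _ => Nat.zero_le _) (mem_univ a)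
    obtain ⟨j0, hj0⟩ := Finset.card_pos.mp hcb
    rw [Finset.mem_filter] at hj0
    obtain ⟨hj0J, hj0b⟩ := hj0
    set I' := I.erase i0 with hI'
    set J' := J.erase j0 with hJ'
    set f' : A × B → ℕ := fun p => if p = (a, b) then f p - 1 else f p with hf'
    have hf'ab : f' (a, b) = f (a, b) - 1 := by simp [hf']
    have hf'ne : ∀ p, p ≠ (a, b) → f' p = f p := by intro p hp; simp [hf', hp]
    have hrow' : ∀ a', ∑ b', f' (a', b') = (I'.filter fun i => tR i = a').card := by
      intro a'
      have hfe : (I'.filter fun i => tR i = a') = (I.filter fun i => tR i = a').erase i0 := by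
        rw [hI', Finset.filter_erase]
      by_cases haa : a' = a
      · have h1 : f' (a', b) + 1 = f (a', b) := by
          have : 1 ≤ f (a', b) := by rw [haa]; exact hfab
          simp [hf', haa]; omega
        have h2 : ∀ b' ∈ univ.erase b, f' (a', b') = f (a', b') := by
          intro b' hb'
          simp only [Finset.mem_erase] at hb'
          exact hf'ne _ (by simp only [ne_eq, Prod.mk.injEq, not_and]; intro _; exact hb'.1)
        have hs1 : ∑ b', f' (a', b') = f' (a', b) + ∑ b' ∈ univ.erase b, f' (a', b') :=
          (Finset.add_sum_erase _ _ (mem_univ b)).symm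
        have hs2 : ∑ b', f (a', b') = f (a', b) + ∑ b' ∈ univ.erase b, f (a', b') :=
          (Finset.add_sum_erase _ _ (mem_univ b)).symm
        have hmem : i0 ∈ I.filter fun i => tR i = a' := by simp [hi0, ha, haa]
        have hcard : (I'.filter fun i => tR i = a').card
            = (I.filter fun i => tR i = a').card - 1 := by
          rw [hfe, Finset.card_erase_of_mem hmem]
        rw [hcard, ← hrow a', hs2, hs1, Finset.sum_congr rfl h2]
        omega
      · have h2 : ∀ b' ∈ univ, f' (a', b') = f (a', b') := by
          intro b' _
          exact hf'ne _ (by simp only [ne_eq, Prod.mk.injEq, not_and]; intro h; exact absurd h haa)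
        have hcard : (I'.filter fun i => tR i = a') = I.filter fun i => tR i = a' := by
          rw [hfe, Finset.erase_eq_of_notMem]
          simp only [Finset.mem_filter, not_and]
          intro _ h
          exact haa (ha.trans h).symm
        rw [hcard, ← hrow a', Finset.sum_congr rfl h2]
    have hcol' : ∀ b', ∑ a', f' (a', b') = (J'.filter fun j => tS j = b').card := by
      intro b'
      have hfe : (J'.filter fun j => tS j = b') = (J.filter fun j => tS j = b').erase j0 := by
        rw [hJ', Finset.filter_erase]
      by_cases hbb : b' = b
      · have h1 : f' (a, b') + 1 = f (a, b') := by
          have : 1 ≤ f (a, b') := by rw [hbb]; exact hfab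
          simp [hf', hbb]; omega
        have h2 : ∀ a' ∈ univ.erase a, f' (a', b') = f (a', b') := by
          intro a' ha'
          simp only [Finset.mem_erase] at ha'
          exact hf'ne _ (by simp only [ne_eq, Prod.mk.injEq, not_and]; intro h; exact absurd h ha'.1)
        have hs1 : ∑ a', f' (a', b') = f' (a, b') + ∑ a' ∈ univ.erase a, f' (a', b') :=
          (Finset.add_sum_erase _ _ (mem_univ a)).symm
        have hs2 : ∑ a', f (a', b') = f (a, b') + ∑ a' ∈ univ.erase a, f (a', b') :=
          (Finset.add_sum_erase _ _ (mem_univ a)).symm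
        have hmem : j0 ∈ J.filter fun j => tS j = b' := by simp [hj0J, hj0b, hbb]
        have hcard : (J'.filter fun j => tS j = b').card
            = (J.filter fun j => tS j = b').card - 1 := by
          rw [hfe, Finset.card_erase_of_mem hmem]
        rw [hcard, ← hcol b', hs2, hs1, Finset.sum_congr rfl h2]
        omega
      · have h2 : ∀ a' ∈ univ, f' (a', b') = f (a', b') := by
          intro a' _
          exact hf'ne _ (by simp only [ne_eq, Prod.mk.injEq, not_and]; intro _; exact hbb)
        have hcard : (J'.filter fun j => tS j = b') = J.filter fun j => tS j = b' := by
          rw [hfe, Finset.erase_eq_of_notMem]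
          simp only [Finset.mem_filter, not_and]
          intro _ h
          exact absurd (h.symm.trans hj0b) hbb
        rw [hcard, ← hcol b', Finset.sum_congr rfl h2]
    have hI'c : I'.card = n := by rw [hI', Finset.card_erase_of_mem hi0, hI]; omega
    have hJ'c : J'.card = n := by rw [hJ', Finset.card_erase_of_mem hj0J, hJ]; omega
    obtain ⟨π', hbij', hcount'⟩ := ih I' J' tR tS f' hI'c hJ'c hrow' hcol'
    set π : ι → ι := fun i => if i = i0 then j0 else π' i with hπ
    have hπi0 : π i0 = j0 := by simp [hπ]
    have hπne : ∀ i, i ≠ i0 → π i = π' i := by intro i hi; simp [hπ, hi]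
    have hJ'sub : (J' : Set ι) ⊆ ↑J := by intro x hx; exact Finset.mem_of_mem_erase hx
    have hmemI' : ∀ i ∈ I, i ≠ i0 → i ∈ I' := by
      intro i hiI hne; exact Finset.mem_erase.mpr ⟨hne, hiI⟩
    refine ⟨π, ⟨?_, ?_, ?_⟩, ?_⟩
    · intro i hi
      by_cases h : i = i0
      · subst h; rw [hπi0]; exact hj0J
      · rw [hπne i h]; exact hJ'sub (hbij'.mapsTo (hmemI' i hi h))
    · intro x hx y hy hxy
      by_cases hx0 : x = i0 <;> by_cases hy0 : y = i0
      · rw [hx0, hy0]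
      · exfalso
        rw [hx0, hπi0, hπne y hy0] at hxy
        have := hbij'.mapsTo (hmemI' y hy hy0)
        rw [← hxy] at this
        exact (Finset.mem_erase.mp this).1 rfl
      · exfalso
        rw [hy0, hπi0, hπne x hx0] at hxy
        have := hbij'.mapsTo (hmemI' x hx hx0)
        rw [hxy] at this
        exact (Finset.mem_erase.mp this).1 rfl
      · rw [hπne x hx0, hπne y hy0] at hxy
        exact hbij'.injOn (hmemI' x hx hx0) (hmemI' y hy hy0) hxy
    · intro j hj
      by_cases h : j = j0
      · exact ⟨i0, hi0, by rw [hπi0, h]⟩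
      · obtain ⟨i, hi, hij⟩ := hbij'.surjOn (Finset.mem_coe.mpr (Finset.mem_erase.mpr ⟨h, hj⟩))
        have hii0 : i ≠ i0 := fun hh => by
          have : (i : ι) ∈ I' := hi
          rw [hh] at this; exact (Finset.mem_erase.mp this).1 rfl
        exact ⟨i, Finset.mem_coe.mpr (Finset.mem_of_mem_erase hi), by rw [hπne i hii0]; exact hij⟩
    · intro p
      have hIins : I = insert i0 I' := (Finset.insert_erase hi0).symm
      have hfilt : (I.filter fun i => tR i = p.1 ∧ tS (π i) = p.2)
          = if p = (a, b) then insert i0 (I'.filter fun i => tR i = p.1 ∧ tS (π' i) = p.2)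
            else (I'.filter fun i => tR i = p.1 ∧ tS (π' i) = p.2) := by
        rw [hIins, Finset.filter_insert]
        have hcongr : (I'.filter fun i => tR i = p.1 ∧ tS (π i) = p.2)
            = I'.filter fun i => tR i = p.1 ∧ tS (π' i) = p.2 := by
          apply Finset.filter_congr
          intro i hi
          rw [hπne i (Finset.mem_erase.mp hi).1]
        rw [hcongr]
        by_cases hp : p = (a, b)
        · subst hp
          simp [hπi0, ha.symm, hj0b]
        · have : ¬ (tR i0 = p.1 ∧ tS (π i0) = p.2) := by
            rw [hπi0]
            intro ⟨h1, h2⟩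
            exact hp (by rw [Prod.ext_iff]; exact ⟨h1.symm, by rw [← h2, hj0b]⟩)
          simp only [this, if_false, if_neg hp]
      rw [hfilt]
      by_cases hp : p = (a, b)
      · rw [if_pos hp]
        have hnotmem : i0 ∉ (I'.filter fun i => tR i = p.1 ∧ tS (π' i) = p.2) := by
          intro h
          exact (Finset.mem_erase.mp (Finset.mem_filter.mp h).1).1 rfl
        rw [Finset.card_insert_of_notMem hnotmem, hcount' p, hp, hf'ab]
        omega
      · rw [if_neg hp, hcount' p, hf'ne p hp]
end Matching

/-- Merging signatures. Let `R, S` be disjoint vertex subsets of a finite graph `G` and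
`T = R ∪ S`. Let `σT`, `σR`, `σS` be a `T`-, `R`- and `S`-signature such that the triple
`(σT, σR, σS)` is compatible, there is a valid partial `b`-coloring of `G[R]` with `k`
colors whose `R`-signature is `σR`, and there is a valid partial `b`-coloring of `G[S]`
with `k` colors whose `S`-signature is `σS`. Then there is a valid partial `b`-coloring
of `G[T]` with `k` colors whose `T`-signature is `σT`. -/
theorem merge_signatures {V : Type*} [Fintype V] [DecidableEq V] (G : SimpleGraph V)
    (R S : Set V) (hRS : Disjoint R S) (k : ℕ)
    (σT : UType G (R ∪ S) → ℕ) (σR : UType G R → ℕ) (σS : UType G S → ℕ)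
    (hσT : IsSignature G (R ∪ S) k σT)
    (hσR : IsSignature G R k σR)
    (hσS : IsSignature G S k σS)
    (hcomp : CompatibleSignatures G R S σT σR σS)
    (hR : ∃ (C : Fin k → Set V) (B : Set V),
      IsValidPartialBColoring G R C B ∧ sigOf G R C B = σR)
    (hS : ∃ (C : Fin k → Set V) (B : Set V),
      IsValidPartialBColoring G S C B ∧ sigOf G S C B = σS) :
    ∃ (C : Fin k → Set V) (B : Set V),
      IsValidPartialBColoring G (R ∪ S) C B ∧ sigOf G (R ∪ S) C B = σT := by
  classical
  obtain ⟨CR, BR, ⟨⟨hRunion, hRdisj, hRind, hRB, hRsum⟩, hRvalid⟩, hRsig⟩ := hR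
  obtain ⟨CS, BS, ⟨⟨hSunion, hSdisj, hSind, hSB, hSsum⟩, hSvalid⟩, hSsig⟩ := hS
  obtain ⟨f, hf0, hfrow, hfcol, hfτ⟩ := hcomp
  set tR : Fin k → UType G R := fun i => typeOf G R BR (CR i) with htR
  set tS : Fin k → UType G S := fun j => typeOf G S BS (CS j) with htS
  have hCRsub : ∀ i, CR i ⊆ R := fun i => (hRind i).1
  have hCSsub : ∀ j, CS j ⊆ S := fun j => (hSind j).1
  have hcountR : ∀ ρ, (Finset.univ.filter fun i => tR i = ρ).card = σR ρ := by
    intro ρ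
    rw [← hRsig]
    show _ = Nat.card {i : Fin k // typeOf G R BR (CR i) = ρ}
    rw [Nat.card_eq_fintype_card, Fintype.card_subtype]
  have hcountS : ∀ σ, (Finset.univ.filter fun j => tS j = σ).card = σS σ := by
    intro σ
    rw [← hSsig]
    show _ = Nat.card {j : Fin k // typeOf G S BS (CS j) = σ}
    rw [Nat.card_eq_fintype_card, Fintype.card_subtype]
  have hrow : ∀ ρ, ∑ σ', f (ρ, σ') = (Finset.univ.filter fun i => tR i = ρ).card := by
    intro ρ
    rw [hcountR ρ, ← hfrow ρ, finsum_eq_sum_of_fintype]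
  have hcol : ∀ σ', ∑ ρ, f (ρ, σ') = (Finset.univ.filter fun j => tS j = σ').card := by
    intro σ'
    rw [hcountS σ', ← hfcol σ', finsum_eq_sum_of_fintype]
  obtain ⟨π, hbij, hcount⟩ :=
    exists_matching k Finset.univ Finset.univ tR tS f (by simp) (by simp) hrow hcol
  have hπbij : Function.Bijective π :=
    Set.bijOn_univ.mp (by simpa using hbij)
  set Cnew : Fin k → Set V := fun i => CR i ∪ CS (π i) with hCnew
  have hcompat : ∀ i, CompatibleTypes G R S (tR i) (tS (π i)) := by
    intro i
    by_contra hnc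
    have h0 := hf0 (tR i, tS (π i)) hnc
    have hc := hcount (tR i, tS (π i))
    rw [h0, Finset.card_eq_zero] at hc
    have hmem : i ∈ Finset.univ.filter
        fun j => tR j = (tR i, tS (π i)).1 ∧ tS (π j) = (tR i, tS (π i)).2 := by simp
    rw [hc] at hmem
    exact absurd hmem (Finset.notMem_empty i)
  have htype : ∀ i, typeOf G (R ∪ S) (BR ∪ BS) (Cnew i)
      = mergeType G R S (tR i) (tS (π i)) :=
    fun i => typeOf_union G hRS hRB hSB (hCRsub i) (hCSsub (π i))
  have h1 : (⋃ i, Cnew i) = R ∪ S := by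
    show (⋃ i, CR i ∪ CS (π i)) = R ∪ S
    rw [Set.iUnion_union_distrib, hπbij.surjective.iUnion_comp CS, hRunion, hSunion]
  have h2 : Pairwise fun i j => Disjoint (Cnew i) (Cnew j) := by
    intro i j hij
    show Disjoint (CR i ∪ CS (π i)) (CR j ∪ CS (π j))
    refine Set.disjoint_union_left.mpr
      ⟨Set.disjoint_union_right.mpr ⟨?_, ?_⟩, Set.disjoint_union_right.mpr ⟨?_, ?_⟩⟩
    · exact hRdisj hij
    · exact hRS.mono (hCRsub i) (hCSsub (π j))
    · exact (hRS.mono (hCRsub j) (hCSsub (π i))).symm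
    · exact hSdisj (hπbij.injective.ne hij)
  have hopcontra : ∀ i u v, u ∈ CR i → v ∈ CS (π i) → ¬ G.Adj u v := by
    intro i u v huR hvS hadj
    have hop := opEdge_cls G hRS (hCRsub i huR) (hCSsub _ hvS) hadj
    obtain ⟨-, h2', -⟩ := hcompat i
    exact h2' ⟨⟨cls G R u, cls_mem_eqClasses G (hCRsub i huR)⟩,
      ⟨cls G S v, cls_mem_eqClasses G (hCSsub _ hvS)⟩, hop,
      (descOf_eq_contains_iff _ _ _ _ _).mpr ⟨u, mem_cls_self G (hCRsub i huR), huR⟩,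
      (descOf_eq_contains_iff _ _ _ _ _).mpr ⟨v, mem_cls_self G (hCSsub _ hvS), hvS⟩⟩
  have h3 : ∀ i, IndepIn G (R ∪ S) (Cnew i) := by
    intro i
    refine ⟨Set.union_subset_union (hCRsub i) (hCSsub (π i)), ?_⟩
    intro u hu v hv hadj
    rcases hu with huR | huS <;> rcases hv with hvR | hvS
    · exact (hRind i).2 u huR v hvR hadj
    · exact hopcontra i u v huR hvS hadj
    · exact hopcontra i v u hvR huS hadj.symm
    · exact (hSind (π i)).2 u huS v hvS hadj
  have h4 : BR ∪ BS ⊆ R ∪ S := Set.union_subset_union hRB hSB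
  have h5 : ∀ i, (Cnew i ∩ (BR ∪ BS)).Subsingleton := by
    intro i x hx y hy
    obtain ⟨hc1, -, -⟩ := hcompat i
    have hclass : ∀ z, z ∈ Cnew i ∩ (BR ∪ BS) → z ∈ CR i ∩ BR ∨ z ∈ CS (π i) ∩ BS := by
      rintro z ⟨hz1 | hz1, hz2 | hz2⟩
      · exact Or.inl ⟨hz1, hz2⟩
      · exact absurd rfl (hRS.ne_of_mem (hCRsub i hz1) (hSB hz2))
      · exact absurd rfl (hRS.ne_of_mem (hRB hz2) (hCSsub _ hz1))
      · exact Or.inr ⟨hz1, hz2⟩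
    have hbitR : ∀ z, z ∈ CR i ∩ BR → (tR i).2 = true := by
      intro z hz
      show (if (CR i ∩ BR).Nonempty then true else false) = true
      simp [Set.nonempty_of_mem hz]
    have hbitS : ∀ z, z ∈ CS (π i) ∩ BS → (tS (π i)).2 = true := by
      intro z hz
      show (if (CS (π i) ∩ BS).Nonempty then true else false) = true
      simp [Set.nonempty_of_mem hz]
    rcases hclass x hx with hx' | hx' <;> rcases hclass y hy with hy' | hy'
    · exact hRsum i hx' hy'
    · exact absurd ⟨hbitR x hx', hbitS y hy'⟩ hc1
    · exact absurd ⟨hbitR y hy', hbitS x hx'⟩ hc1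
    · exact hSsum (π i) hx' hy'
  have h6 : ∀ i, ValidClass G (R ∪ S) (BR ∪ BS) (Cnew i) := by
    intro i
    rintro ⟨Q, hQ, hQne, v, ⟨hvB, hvQ⟩, hvins⟩
    have hQv : Q = cls G (R ∪ S) v := eq_cls_of_mem G hQ hvQ
    -- the premise of clause (3) of compatibility
    have hprem : (∃ QR : Classes G R, QR.1 ⊆ (⟨Q, hQ⟩ : Classes G (R ∪ S)).1 ∧
          (tR i).1 QR = Desc.contains) ∨
        (∃ QS : Classes G S, QS.1 ⊆ (⟨Q, hQ⟩ : Classes G (R ∪ S)).1 ∧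
          (tS (π i)).1 QS = Desc.contains) := by
      have := (union_contains_iff G (hCRsub i) (hCSsub (π i))
        (⟨Q, hQ⟩ : Classes G (R ∪ S))).mp hQne
      rcases this with ⟨QR, hs, hne⟩ | ⟨QS, hs, hne⟩
      · exact Or.inl ⟨QR, hs, (descOf_eq_contains_iff _ _ _ _ _).mpr hne⟩
      · exact Or.inr ⟨QS, hs, (descOf_eq_contains_iff _ _ _ _ _).mpr hne⟩
    obtain ⟨-, -, hc3⟩ := hcompat i
    obtain ⟨hc3R, hc3S⟩ := hc3 ⟨Q, hQ⟩ hprem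
    rcases hvB with hvBR | hvBS
    · have hvR : v ∈ R := hRB hvBR
      by_cases hcase : (cls G R v ∩ CR i).Nonempty
      · -- contradicts validity of the R-coloring
        refine hRvalid i ⟨cls G R v, cls_mem_eqClasses G hvR, hcase,
          v, ⟨hvBR, mem_cls_self G hvR⟩, ?_⟩
        apply Set.eq_empty_of_subset_empty
        rintro x ⟨hx1, hx2⟩
        rw [← hvins]
        rcases hx1 with rfl | hx1
        · exact ⟨Set.mem_insert _ _, Or.inl hx2⟩
        · exact ⟨Set.mem_insert_iff.mpr (Or.inr ⟨hx1.1, Or.inl hx1.2⟩), Or.inl hx2⟩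
      · -- the R-class of v has desc demand
        have hdem : (tR i).1 ⟨cls G R v, cls_mem_eqClasses G hvR⟩ = Desc.demand := by
          show descOf G R BR (CR i) _ = Desc.demand
          rw [descOf_eq_demand_iff]
          refine ⟨hcase, v, ⟨hvBR, mem_cls_self G hvR⟩, ?_⟩
          apply Set.eq_empty_of_subset_empty
          rintro x ⟨hx1, hx2⟩
          rw [← hvins]
          exact ⟨Set.mem_insert_iff.mpr (Or.inr ⟨hx1.1, Or.inl hx1.2⟩), Or.inl hx2⟩
        have hsub : cls G R v ⊆ Q := by
          rw [hQv]; exact cls_subset_cls_union_left G R S v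
        obtain ⟨QS, hQScont, hop⟩ :=
          hc3R ⟨cls G R v, cls_mem_eqClasses G hvR⟩ hsub hdem
        have : (QS.1 ∩ CS (π i)).Nonempty :=
          (descOf_eq_contains_iff _ _ _ _ _).mp hQScont
        obtain ⟨w, hwQS, hwCS⟩ := this
        have hadj : G.Adj v w := hop v (mem_cls_self G hvR) w hwQS
        have hwS : w ∈ S := eqClasses_subset G QS.2 hwQS
        have : w ∈ insert v (indN G (R ∪ S) v) ∩ Cnew i :=
          ⟨Set.mem_insert_iff.mpr (Or.inr ⟨hadj, Or.inr hwS⟩), Or.inr hwCS⟩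
        rw [hvins] at this
        exact this
    · have hvS : v ∈ S := hSB hvBS
      by_cases hcase : (cls G S v ∩ CS (π i)).Nonempty
      · refine hSvalid (π i) ⟨cls G S v, cls_mem_eqClasses G hvS, hcase,
          v, ⟨hvBS, mem_cls_self G hvS⟩, ?_⟩
        apply Set.eq_empty_of_subset_empty
        rintro x ⟨hx1, hx2⟩
        rw [← hvins]
        rcases hx1 with rfl | hx1
        · exact ⟨Set.mem_insert _ _, Or.inr hx2⟩
        · exact ⟨Set.mem_insert_iff.mpr (Or.inr ⟨hx1.1, Or.inr hx1.2⟩), Or.inr hx2⟩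
      · have hdem : (tS (π i)).1 ⟨cls G S v, cls_mem_eqClasses G hvS⟩ = Desc.demand := by
          show descOf G S BS (CS (π i)) _ = Desc.demand
          rw [descOf_eq_demand_iff]
          refine ⟨hcase, v, ⟨hvBS, mem_cls_self G hvS⟩, ?_⟩
          apply Set.eq_empty_of_subset_empty
          rintro x ⟨hx1, hx2⟩
          rw [← hvins]
          exact ⟨Set.mem_insert_iff.mpr (Or.inr ⟨hx1.1, Or.inr hx1.2⟩), Or.inr hx2⟩
        have hsub : cls G S v ⊆ Q := by
          rw [hQv]; exact cls_subset_cls_union_right G R S v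
        obtain ⟨QR, hQRcont, hop⟩ :=
          hc3S ⟨cls G S v, cls_mem_eqClasses G hvS⟩ hsub hdem
        have : (QR.1 ∩ CR i).Nonempty :=
          (descOf_eq_contains_iff _ _ _ _ _).mp hQRcont
        obtain ⟨w, hwQR, hwCR⟩ := this
        have hadj : G.Adj v w := G.adj_symm (hop w hwQR v (mem_cls_self G hvS))
        have hwR : w ∈ R := eqClasses_subset G QR.2 hwQR
        have : w ∈ insert v (indN G (R ∪ S) v) ∩ Cnew i :=
          ⟨Set.mem_insert_iff.mpr (Or.inr ⟨hadj, Or.inl hwR⟩), Or.inl hwCR⟩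
        rw [hvins] at this
        exact this
  refine ⟨Cnew, BR ∪ BS, ⟨⟨h1, h2, h3, h4, h5⟩, h6⟩, ?_⟩
  funext τ
  show Nat.card {i : Fin k // typeOf G (R ∪ S) (BR ∪ BS) (Cnew i) = τ} = σT τ
  rw [Nat.card_eq_fintype_card, Fintype.card_subtype]
  have hfc : (Finset.univ.filter fun i => typeOf G (R ∪ S) (BR ∪ BS) (Cnew i) = τ)
      = Finset.univ.filter fun i => mergeType G R S (tR i) (tS (π i)) = τ := by
    apply Finset.filter_congr
    intro i _
    rw [htype i]
  rw [hfc]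
  set g : Fin k → UType G R × UType G S := fun i => (tR i, tS (π i)) with hg
  set t : Finset (UType G R × UType G S) :=
    Finset.univ.filter fun p => mergeType G R S p.1 p.2 = τ with ht
  have hmaps : ∀ x ∈ (Finset.univ.filter fun i => mergeType G R S (tR i) (tS (π i)) = τ),
      g x ∈ t := by
    intro x hx
    simp only [ht, Finset.mem_filter, Finset.mem_univ, true_and] at hx ⊢
    exact hx
  rw [Finset.card_eq_sum_card_fiberwise hmaps]
  have hfiber : ∀ p ∈ t,
      ((Finset.univ.filter fun i => mergeType G R S (tR i) (tS (π i)) = τ).filter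
        fun i => g i = p).card = f p := by
    intro p hp
    simp only [ht, Finset.mem_filter, Finset.mem_univ, true_and] at hp
    rw [Finset.filter_filter]
    have : (Finset.univ.filter fun i =>
          mergeType G R S (tR i) (tS (π i)) = τ ∧ g i = p)
        = Finset.univ.filter fun i => tR i = p.1 ∧ tS (π i) = p.2 := by
      apply Finset.filter_congr
      intro i _
      constructor
      · rintro ⟨-, hgi⟩
        exact ⟨congrArg Prod.fst hgi, congrArg Prod.snd hgi⟩
      · rintro ⟨hh1, hh2⟩
        have hgi : g i = p := Prod.ext hh1 hh2
        exact ⟨by rw [hg] at hgi; rw [show tR i = p.1 from hh1, show tS (π i) = p.2 from hh2, hp], hgi⟩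
    rw [this, hcount p]
  rw [Finset.sum_congr rfl hfiber]
  rw [← hfτ τ]
  have hset : {p : UType G R × UType G S | mergeType G R S p.1 p.2 = τ} = ↑t := by
    ext p
    simp [ht]
  rw [hset, finsum_mem_coe_finset]

end BCol
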